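/- Let $G$ be a row-finite directed graph and $(E, v_0)$ a 1-sink extension of $G$. Let $\sigma$ be an assignment from paths/edges of $E$ to operators such that $\sigma$ comes from a representation of the Cuntz-Krieger relations of $E$ and $\sigma(p_{v_0})$ has rank 1. Then for every edge $e \in E^1 \setminus G^1$, the rank of $\sigma(s_e)$ equals $\# Z(r(e), v_0)$, the number of paths from $r(e)$ to $v_0$ all of whose edges lie in $E^1 \setminus G^1$. -/

import Mathlib

open scoped BigOperators

/-- `l` is a path: consecutive edges are composable. -/
def IsPathList {V E : Type*} (r s : E → V) (l : List E) : Prop :=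
  l.Chain' (fun a b => r a = s b)

/-- `v ≥ w`: there is a (possibly empty) path from `v` to `w`. -/
def Reach {V E : Type*} (r s : E → V) : V → V → Prop :=
  Relation.ReflTransGen (fun a b => ∃ e, s e = a ∧ r e = b)

/-- `(E, v₀)` is a 1-sink extension of the subgraph `G = (GV, GE)` of the
row-finite graph `E = (VE, EE, r, s)`:  `H := GVᶜ` is finite, has no sources,
and contains exactly one sink `v₀`; no loop of `E` has all its vertices in
`H`; every edge outside `GE` has range in `H`; and sinks of `G` remain sinks
of `E`. -/
structure OneSinkExt {VE EE : Type*} (r s : EE → VE)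
    (GV : Set VE) (GE : Set EE) (v₀ : VE) : Prop where
  subgraph : ∀ e ∈ GE, s e ∈ GV ∧ r e ∈ GV
  rowFinite : ∀ v : VE, {e : EE | s e = v}.Finite
  H_finite : (GVᶜ : Set VE).Finite
  H_noSource : ∀ v ∈ (GVᶜ : Set VE), ∃ e : EE, r e = v
  sink_mem : v₀ ∈ (GVᶜ : Set VE)
  sink_isSink : ¬ ∃ e : EE, s e = v₀
  sink_unique : ∀ v ∈ (GVᶜ : Set VE), (¬ ∃ e : EE, s e = v) → v = v₀
  no_H_loop : ∀ l : List EE, l ≠ [] → IsPathList r s l →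
      (∃ h : l ≠ [], s (l.head h) = r (l.getLast h)) →
      ¬ ∀ f ∈ l, s f ∈ (GVᶜ : Set VE)
  new_range : ∀ e : EE, e ∉ GE → r e ∈ (GVᶜ : Set VE)
  G_sinks : ∀ v ∈ GV, (¬ ∃ e ∈ GE, s e = v) → ¬ ∃ e : EE, s e = v

/-- `Z(w, v₀)`: the set of paths from `w` to `v₀` all of whose edges lie
outside `GE` (the empty path counts when `w = v₀`). -/
def ZPaths {VE EE : Type*} (r s : EE → VE) (GE : Set EE) (v₀ w : VE) :
    Set (List EE) :=
  {l | IsPathList r s l ∧ (∀ e ∈ l, e ∉ GE) ∧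
    ((l = [] ∧ w = v₀) ∨ ∃ h : l ≠ [], s (l.head h) = w ∧ r (l.getLast h) = v₀)}


set_option linter.unusedSectionVars false
set_option linter.unusedVariables false

open Module



section CstarAux
variable {H : Type*} [NormedAddCommGroup H] [InnerProductSpace ℂ H] [CompleteSpace H]

/-- If `star A * A` is idempotent, then `A * (star A * A) = A`. -/
lemma mul_star_mul_self (A : H →L[ℂ] H)
    (hid : (star A * A) * (star A * A) = star A * A) :
    A * (star A * A) = A := by
  have key : star (A * (star A * A) - A) * (A * (star A * A) - A) = 0 := by
    have hBs : star (star A * A) = star A * A := by rw [star_mul, star_star]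
    rw [star_sub, star_mul, hBs]
    have e1 : ((star A * A) * star A - star A) * (A * (star A * A) - A)
        = ((star A * A) * (star A * A)) * (star A * A) - (star A * A) * (star A * A)
          - ((star A * A) * (star A * A) - star A * A) := by noncomm_ring
    rw [e1]
    simp only [hid]
    abel
  have h0 := (CStarRing.star_mul_self_eq_zero_iff (A * (star A * A) - A)).mp key
  exact sub_eq_zero.mp h0

end CstarAux


section OpAux
variable {H : Type*} [NormedAddCommGroup H] [InnerProductSpace ℂ H] [CompleteSpace H]

lemma clm_range_mul_eq_map (A B : H →L[ℂ] H) :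
    LinearMap.range (A * B).toLinearMap
      = (LinearMap.range B.toLinearMap).map A.toLinearMap := by
  rw [ContinuousLinearMap.mul_def, ContinuousLinearMap.toLinearMap_comp, LinearMap.range_comp]

lemma clm_range_mul_le (A B : H →L[ℂ] H) :
    LinearMap.range (A * B).toLinearMap ≤ LinearMap.range A.toLinearMap := by
  rw [clm_range_mul_eq_map]; exact LinearMap.map_le_range

lemma finrank_range_partial_isometry (A : H →L[ℂ] H)
    (hid : (star A * A) * (star A * A) = star A * A)
    (hfd : FiniteDimensional ℂ (LinearMap.range (star A * A).toLinearMap)) :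
    FiniteDimensional ℂ (LinearMap.range A.toLinearMap) ∧
      finrank ℂ (LinearMap.range A.toLinearMap)
        = finrank ℂ (LinearMap.range (star A * A).toLinearMap) := by
  have hA : A * (star A * A) = A := mul_star_mul_self A hid
  have h1 : LinearMap.range A.toLinearMap
      = (LinearMap.range (star A * A).toLinearMap).map A.toLinearMap := by
    conv_lhs => rw [← hA]
    exact clm_range_mul_eq_map A _
  have hfd' : FiniteDimensional ℂ (LinearMap.range A.toLinearMap) := by
    rw [h1]; exact Module.Finite.map _ _
  refine ⟨hfd', le_antisymm ?_ ?_⟩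
  · rw [h1]; exact Submodule.finrank_map_le _ _
  · have h2 : LinearMap.range (star A * A).toLinearMap
        = (LinearMap.range A.toLinearMap).map (star A).toLinearMap :=
      clm_range_mul_eq_map (star A) A
    rw [h2]; exact Submodule.finrank_map_le _ _

lemma range_mul_star_self (A : H →L[ℂ] H)
    (hid : (star A * A) * (star A * A) = star A * A) :
    LinearMap.range (A * star A).toLinearMap = LinearMap.range A.toLinearMap := by
  have hA : (A * star A) * A = A := by
    rw [mul_assoc]; exact mul_star_mul_self A hid
  refine le_antisymm (clm_range_mul_le A (star A)) ?_
  conv_lhs => rw [← hA]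
  exact clm_range_mul_le _ A

end OpAux
section OrthAux
variable {H : Type*} [NormedAddCommGroup H] [InnerProductSpace ℂ H] [CompleteSpace H]

lemma sa_inner {T : H →L[ℂ] H} (h : star T = T) (u v : H) :
    (inner ℂ (T u) v : ℂ) = inner ℂ u (T v) := by
  conv_lhs => rw [← h, ContinuousLinearMap.star_eq_adjoint]
  exact ContinuousLinearMap.adjoint_inner_left T v u

lemma proj_inner_eq_norm_sq {T : H →L[ℂ] H} (hsa : star T = T) (hid : T * T = T) (y : H) :
    (inner ℂ (T y) y : ℂ) = (‖T y‖ : ℂ) ^ 2 := by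
  have h1 : T (T y) = T y := by
    rw [← ContinuousLinearMap.mul_apply, hid]
  calc (inner ℂ (T y) y : ℂ) = inner ℂ (T (T y)) y := by rw [h1]
    _ = inner ℂ (T y) (T y) := sa_inner hsa (T y) y
    _ = (‖T y‖ : ℂ) ^ 2 := inner_self_eq_norm_sq_to_K (T y)

lemma proj_sum_orth {ι : Type*} (F : Finset ι) (Q : ι → (H →L[ℂ] H)) (Pw : H →L[ℂ] H)
    (hQsa : ∀ i ∈ F, star (Q i) = Q i) (hQid : ∀ i ∈ F, Q i * Q i = Q i)
    (hPsa : star Pw = Pw) (hPid : Pw * Pw = Pw)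
    (hsum : Pw = ∑ i ∈ F, Q i) :
    ∀ i ∈ F, ∀ j ∈ F, i ≠ j → Q i * Q j = 0 := by
  classical
  intro i hi j hj hij
  ext x
  set y := Q j x with hy
  have hjy : Q j y = y := by rw [hy, ← ContinuousLinearMap.mul_apply, hQid j hj]
  -- key sum identity
  have hPyC : (inner ℂ (Pw y) y : ℂ) = (‖Pw y‖ : ℂ) ^ 2 := proj_inner_eq_norm_sq hPsa hPid y
  have hPapply : Pw y = ∑ k ∈ F, Q k y := by rw [hsum]; simp
  have hsumC : ((‖Pw y‖ : ℝ) ^ 2 : ℂ) = ((∑ k ∈ F, ‖Q k y‖ ^ 2 : ℝ) : ℂ) := by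
    push_cast
    rw [← hPyC, hPapply, sum_inner]
    exact Finset.sum_congr rfl fun k hk => by
      rw [proj_inner_eq_norm_sq (hQsa k hk) (hQid k hk) y]
  have hsumR : ‖Pw y‖ ^ 2 = ∑ k ∈ F, ‖Q k y‖ ^ 2 := by exact_mod_cast hsumC
  -- ‖Pw y‖ ≤ ‖y‖
  have hle : ‖Pw y‖ ^ 2 ≤ ‖y‖ ^ 2 := by
    have h2 : ‖(inner ℂ (Pw y) y : ℂ)‖ ≤ ‖Pw y‖ * ‖y‖ := norm_inner_le_norm _ _
    rw [hPyC] at h2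
    have h3 : ‖((‖Pw y‖ : ℂ)) ^ 2‖ = ‖Pw y‖ ^ 2 := by
      rw [norm_pow]; simp
    rw [h3] at h2
    nlinarith [norm_nonneg (Pw y), norm_nonneg y]
  have hjmem : ‖Q j y‖ ^ 2 = ‖y‖ ^ 2 := by rw [hjy]
  have hsplit : ‖Q j y‖ ^ 2 + ∑ k ∈ F.erase j, ‖Q k y‖ ^ 2 = ∑ k ∈ F, ‖Q k y‖ ^ 2 :=
    Finset.add_sum_erase F (fun k => ‖Q k y‖ ^ 2) hj
  have herase : ∑ k ∈ F.erase j, ‖Q k y‖ ^ 2 ≤ 0 := by linarith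
  have hzero : ∀ k ∈ F.erase j, ‖Q k y‖ ^ 2 = 0 := by
    intro k hk
    have hnn : ∀ k ∈ F.erase j, 0 ≤ ‖Q k y‖ ^ 2 := fun k _ => sq_nonneg _
    have := le_antisymm herase (Finset.sum_nonneg hnn)
    exact (Finset.sum_eq_zero_iff_of_nonneg hnn).mp this k hk
  have : ‖Q i y‖ ^ 2 = 0 := hzero i (Finset.mem_erase.mpr ⟨hij, hi⟩)
  have h4 : Q i y = 0 := by
    rw [pow_eq_zero_iff (by norm_num), norm_eq_zero] at this; exact this
  simpa [ContinuousLinearMap.mul_apply, ← hy] using h4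

end OrthAux
section SupAux
variable {H : Type*} [NormedAddCommGroup H] [InnerProductSpace ℂ H] [CompleteSpace H]

lemma finrank_biSup_orth {ι : Type*} (F : Finset ι) (U : ι → Submodule ℂ H)
    (hfd : ∀ i ∈ F, FiniteDimensional ℂ (U i))
    (horth : ∀ i ∈ F, ∀ j ∈ F, i ≠ j → U i ≤ (U j)ᗮ) :
    FiniteDimensional ℂ ↥(⨆ i ∈ F, U i) ∧
      Module.finrank ℂ ↥(⨆ i ∈ F, U i) = ∑ i ∈ F, Module.finrank ℂ (U i) := by
  classical
  induction F using Finset.induction with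
  | empty =>
    have h0 : (⨆ i ∈ (∅ : Finset ι), U i) = ⊥ := by simp
    rw [h0, Finset.sum_empty]
    exact ⟨inferInstance, finrank_bot ℂ H⟩
  | @insert a F ha ih =>
    have hfdF : ∀ i ∈ F, FiniteDimensional ℂ (U i) := fun i hi =>
      hfd i (Finset.mem_insert_of_mem hi)
    obtain ⟨ihfd, ihrank⟩ := ih hfdF (fun i hi j hj hij =>
      horth i (Finset.mem_insert_of_mem hi) j (Finset.mem_insert_of_mem hj) hij)
    have hsup : (⨆ i ∈ (insert a F : Finset ι), U i) = U a ⊔ ⨆ i ∈ F, U i := by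
      exact Finset.iSup_insert a F U
    have hfa : FiniteDimensional ℂ (U a) := hfd a (Finset.mem_insert_self a F)
    haveI := ihfd
    haveI := hfa
    have hle : (⨆ i ∈ F, U i) ≤ (U a)ᗮ := by
      refine iSup₂_le fun i hi => ?_
      have hia : i ≠ a := fun h => ha (h ▸ hi)
      exact horth i (Finset.mem_insert_of_mem hi) a (Finset.mem_insert_self a F) hia
    have hinf : U a ⊓ (⨆ i ∈ F, U i) = ⊥ := by
      have h1 : U a ⊓ (⨆ i ∈ F, U i) ≤ U a ⊓ (U a)ᗮ := inf_le_inf_left _ hle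
      rw [disjoint_iff.mp (Submodule.orthogonal_disjoint (U a))] at h1
      exact le_bot_iff.mp h1
    constructor
    · rw [hsup]; infer_instance
    · rw [hsup, Finset.sum_insert ha, ← ihrank]
      have := Submodule.finrank_sup_add_finrank_inf_eq (U a) (⨆ i ∈ F, U i)
      rw [hinf] at this
      simpa using this

end SupAux
section RangeSup
variable {H : Type*} [NormedAddCommGroup H] [InnerProductSpace ℂ H] [CompleteSpace H]

lemma range_sum_eq_biSup {ι : Type*} (F : Finset ι) (Q : ι → (H →L[ℂ] H)) (Pw : H →L[ℂ] H)
    (hsum : Pw = ∑ i ∈ F, Q i)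
    (horthQ : ∀ i ∈ F, ∀ j ∈ F, i ≠ j → Q i * Q j = 0)
    (hQid : ∀ i ∈ F, Q i * Q i = Q i) :
    LinearMap.range Pw.toLinearMap = ⨆ i ∈ F, LinearMap.range (Q i).toLinearMap := by
  classical
  apply le_antisymm
  · rintro x ⟨y, rfl⟩
    have hap : Pw.toLinearMap y = ∑ i ∈ F, Q i y := by rw [hsum]; simp
    rw [hap]
    exact Submodule.sum_mem _ fun i hi =>
      Submodule.mem_iSup_of_mem i (Submodule.mem_iSup_of_mem hi ⟨y, rfl⟩)
  · refine iSup₂_le fun i hi => ?_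
    rintro x ⟨y, rfl⟩
    have hPQ : Pw * Q i = Q i := by
      rw [hsum, Finset.sum_mul]
      rw [Finset.sum_eq_single i (fun j hj hji => horthQ j hj i hi hji)
        (fun h => absurd hi h)]
      exact hQid i hi
    refine ⟨Q i y, ?_⟩
    show Pw (Q i y) = (Q i).toLinearMap y
    rw [← ContinuousLinearMap.mul_apply, hPQ]; rfl

end RangeSup

section CardAux

lemma ncard_disj_biUnion {α ι : Type*} (F : Finset ι) (g : ι → Set α)
    (hfin : ∀ i ∈ F, (g i).Finite)
    (hdisj : ∀ i ∈ F, ∀ j ∈ F, i ≠ j → Disjoint (g i) (g j)) :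
    (⋃ i ∈ F, g i).Finite ∧ (⋃ i ∈ F, g i).ncard = ∑ i ∈ F, (g i).ncard := by
  classical
  induction F using Finset.induction with
  | empty => simp
  | @insert a F ha ih =>
    obtain ⟨ihfin, ihcard⟩ := ih (fun i hi => hfin i (Finset.mem_insert_of_mem hi))
      (fun i hi j hj hij => hdisj i (Finset.mem_insert_of_mem hi) j (Finset.mem_insert_of_mem hj) hij)
    have hU : (⋃ i ∈ (insert a F : Finset ι), g i) = g a ∪ ⋃ i ∈ F, g i := by
      simp [Set.biUnion_insert]
    have hfa := hfin a (Finset.mem_insert_self a F)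
    have hd : Disjoint (g a) (⋃ i ∈ F, g i) := by
      rw [Set.disjoint_iUnion_right]
      intro i
      rw [Set.disjoint_iUnion_right]
      intro hi
      exact hdisj a (Finset.mem_insert_self a F) i (Finset.mem_insert_of_mem hi)
        (fun h => ha (h ▸ hi))
    rw [hU, Finset.sum_insert ha, ← ihcard]
    exact ⟨hfa.union ihfin, Set.ncard_union_eq hd hfa ihfin⟩

end CardAux
section GraphAux
variable {VE EE : Type*} (r s : EE → VE) (GE : Set EE) (v₀ : VE)

lemma zpaths_sink (hsink : ¬ ∃ e : EE, s e = v₀) :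
    ZPaths r s GE v₀ v₀ = {([] : List EE)} := by
  ext l
  simp only [Set.mem_singleton_iff]
  constructor
  · rintro ⟨hchain, hge, ⟨hnil, -⟩ | ⟨hne, hhead, -⟩⟩
    · exact hnil
    · exact absurd ⟨l.head hne, hhead⟩ hsink
  · rintro rfl
    exact ⟨List.isChain_nil, by simp, Or.inl ⟨rfl, rfl⟩⟩

lemma zpaths_decomp (w : VE) (hw : w ≠ v₀) (hGE : ∀ e, s e = w → e ∉ GE) :
    ZPaths r s GE v₀ w
      = ⋃ e ∈ {e : EE | s e = w}, (List.cons e) '' ZPaths r s GE v₀ (r e) := by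
  ext l
  simp only [Set.mem_iUnion, Set.mem_image, Set.mem_setOf_eq, exists_prop]
  constructor
  · rintro ⟨hchain, hge, ⟨-, hwv⟩ | ⟨hne, hhead, hlast⟩⟩
    · exact absurd hwv hw
    · obtain ⟨e, t, rfl⟩ : ∃ e t, l = e :: t :=
        ⟨l.head hne, l.tail, (List.cons_head_tail hne).symm⟩
      have hse : s e = w := hhead
      have hchain' := List.isChain_cons.mp hchain
      refine ⟨e, hse, t, ⟨hchain'.2, fun f hf => hge f (List.mem_cons_of_mem e hf), ?_⟩, rfl⟩
      rcases eq_or_ne t [] with rfl | ht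
      · left
        refine ⟨rfl, ?_⟩
        simpa using hlast
      · right
        refine ⟨ht, ?_, ?_⟩
        · have := hchain'.1 (t.head ht) (by rw [List.head?_eq_head ht]; rfl)
          exact this.symm
        · rw [← hlast]
          rw [List.getLast_cons ht]
  · rintro ⟨e, hse, t, ⟨hchain, hge, hcase⟩, rfl⟩
    refine ⟨?_, ?_, ?_⟩
    · refine List.isChain_cons.mpr ⟨?_, hchain⟩
      intro b hb
      rcases hcase with ⟨rfl, -⟩ | ⟨ht, hhead, -⟩
      · simp at hb
      · rw [List.head?_eq_head ht] at hb
        have hb' : t.head ht = b := Option.mem_some_iff.mp hb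
        rw [← hb']
        exact hhead.symm
    · intro f hf
      rcases List.mem_cons.mp hf with rfl | hf
      · exact hGE f hse
      · exact hge f hf
    · right
      refine ⟨List.cons_ne_nil e t, hse, ?_⟩
      rcases hcase with ⟨rfl, hre⟩ | ⟨ht, -, hlast⟩
      · simpa using hre
      · rw [List.getLast_cons ht]
        exact hlast

end GraphAux
section ReachAux
variable {VE EE : Type*}

/-- one H-step relation -/
def RelH (r s : EE → VE) (GV : Set VE) (a b : VE) : Prop :=
  a ∈ (GVᶜ : Set VE) ∧ ∃ e, s e = a ∧ r e = b

lemma relH_to_list {r s : EE → VE} {GV : Set VE} {a b : VE}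
    (h : Relation.ReflTransGen (RelH r s GV) a b) :
    a = b ∨ ∃ l : List EE, ∃ hl : l ≠ [], IsPathList r s l ∧
      (∀ f ∈ l, s f ∈ (GVᶜ : Set VE)) ∧ s (l.head hl) = a ∧ r (l.getLast hl) = b := by
  induction h with
  | refl => exact Or.inl rfl
  | @tail b' c hab hbc ih =>
    obtain ⟨hb'H, e, hse, hre⟩ := hbc
    rcases ih with rfl | ⟨l, hl, hpath, hH, hhead, hlast⟩
    · right
      refine ⟨[e], by simp, List.isChain_singleton e, ?_, ?_, ?_⟩
      · intro f hf; simp at hf; subst hf; rw [hse]; exact hb'H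
      · simpa using hse
      · simpa using hre
    · right
      refine ⟨l ++ [e], by simp, ?_, ?_, ?_, ?_⟩
      · refine List.isChain_append.mpr ⟨hpath, List.isChain_singleton e, ?_⟩
        intro x hx y hy
        have hx' : x = l.getLast hl := by
          rwa [List.getLast?_eq_getLast hl, Option.mem_some_iff, eq_comm] at hx
        have hy' : y = e := by
          simpa [Option.mem_some_iff, eq_comm] using hy
        rw [hx', hy', hlast, hse]
      · intro f hf
        rcases List.mem_append.mp hf with hf | hf
        · exact hH f hf
        · simp at hf; subst hf; rw [hse]; exact hb'H
      · rw [List.head_append_of_ne_nil hl]  -- maybe wrong name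
        exact hhead
      · rw [List.getLast_append_right (by simp : ([e] : List EE) ≠ [])]
        simpa using hre

end ReachAux
section MeasureAux
variable {VE EE : Type*} {r s : EE → VE} {GV : Set VE} {GE : Set EE} {v₀ : VE}

lemma reachSet_subset (hext : OneSinkExt r s GV GE v₀) {w : VE} (hw : w ∈ (GVᶜ : Set VE)) :
    {v | Relation.ReflTransGen (RelH r s GV) w v} ⊆ (GVᶜ : Set VE) := by
  intro v hv
  simp only [Set.mem_setOf_eq] at hv
  induction hv with
  | refl => exact hw
  | @tail b c hab hbc ih =>
    obtain ⟨hbH, e, hse, hre⟩ := hbc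
    have heGE : e ∉ GE := fun hGE => hbH (by rw [← hse]; exact (hext.subgraph e hGE).1)
    exact hre ▸ hext.new_range e heGE

lemma reachSet_finite (hext : OneSinkExt r s GV GE v₀) {w : VE} (hw : w ∈ (GVᶜ : Set VE)) :
    {v | Relation.ReflTransGen (RelH r s GV) w v}.Finite :=
  hext.H_finite.subset (reachSet_subset hext hw)

lemma measure_lt (hext : OneSinkExt r s GV GE v₀) {w : VE} (hw : w ∈ (GVᶜ : Set VE))
    {e : EE} (hse : s e = w) :
    {v | Relation.ReflTransGen (RelH r s GV) (r e) v}.ncard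
      < {v | Relation.ReflTransGen (RelH r s GV) w v}.ncard := by
  have hstep : RelH r s GV w (r e) := ⟨hw, e, hse, rfl⟩
  have hsub : {v | Relation.ReflTransGen (RelH r s GV) (r e) v}
      ⊆ {v | Relation.ReflTransGen (RelH r s GV) w v} :=
    fun v hv => Relation.ReflTransGen.head hstep hv
  have hwmem : w ∈ {v | Relation.ReflTransGen (RelH r s GV) w v} := Relation.ReflTransGen.refl
  have hwnot : w ∉ {v | Relation.ReflTransGen (RelH r s GV) (r e) v} := by
    intro hR
    rcases relH_to_list hR with hrew | ⟨l, hl, hpath, hH, hhead, hlast⟩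
    · -- r e = w : loop [e]
      refine hext.no_H_loop [e] (by simp) (List.isChain_singleton e) ?_ ?_
      · exact ⟨by simp, by simp [hse, hrew]⟩
      · intro f hf; simp at hf; subst hf; rw [hse]; exact hw
    · -- cycle e :: l
      refine hext.no_H_loop (e :: l) (by simp) ?_ ?_ ?_
      · refine List.isChain_cons.mpr ⟨?_, hpath⟩
        intro y hy
        rw [List.head?_eq_head hl, Option.mem_some_iff] at hy
        rw [← hy, hhead]
      · refine ⟨by simp, ?_⟩
        have h1 : (e :: l).head (by simp) = e := rfl
        have h2 : (e :: l).getLast (by simp) = l.getLast hl := List.getLast_cons hl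
        rw [h1, h2, hlast, hse]
      · intro f hf
        rcases List.mem_cons.mp hf with rfl | hf
        · rw [hse]; exact hw
        · exact hH f hf
  exact Set.ncard_lt_ncard ((Set.ssubset_iff_of_subset hsub).mpr ⟨w, hwmem, hwnot⟩)
    (reachSet_finite hext hw)
end MeasureAux

/-- if `{S, P}` is a Cuntz-Krieger `E`-family of operators on a
Hilbert space coming from a representation of `C*(E)` for which the
projection `P v₀` at the sink has rank 1, then for each new edge
`e ∈ E¹ \ G¹` the rank of `S e` equals `# Z(r e, v₀)`. -/
theorem rank_eq_card_ZPaths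
    {VE EE : Type*} [Countable VE] [Countable EE] (r s : EE → VE)
    (GV : Set VE) (GE : Set EE) (v₀ : VE)
    (hext : OneSinkExt r s GV GE v₀)
    {H : Type*} [NormedAddCommGroup H] [InnerProductSpace ℂ H] [CompleteSpace H]
    (P : VE → (H →L[ℂ] H)) (S : EE → (H →L[ℂ] H))
    (hproj : ∀ v, IsSelfAdjoint (P v) ∧ P v * P v = P v)
    (horth : ∀ v w, v ≠ w → P v * P w = 0)
    (hCK1 : ∀ e, star (S e) * S e = P (r e))
    (hCK2 : ∀ v : VE, (∃ e, s e = v) →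
      P v = ∑ᶠ e ∈ {e : EE | s e = v}, S e * star (S e))
    (hrank1 : Module.finrank ℂ (LinearMap.range (P v₀).toLinearMap) = 1) :
    ∀ e : EE, e ∉ GE →
      Module.finrank ℂ (LinearMap.range (S e).toLinearMap)
        = (ZPaths r s GE v₀ (r e)).ncard := by
  classical
  have hQid' : ∀ e : EE, (star (S e) * S e) * (star (S e) * S e) = star (S e) * S e :=
    fun e => by rw [hCK1 e]; exact (hproj (r e)).2
  set Q : EE → (H →L[ℂ] H) := fun e => S e * star (S e) with hQdef
  have hQsa : ∀ e : EE, star (Q e) = Q e := fun e => by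
    show star (S e * star (S e)) = S e * star (S e)
    rw [star_mul, star_star]
  have hQid : ∀ e : EE, Q e * Q e = Q e := fun e => by
    show (S e * star (S e)) * (S e * star (S e)) = S e * star (S e)
    have hexp : (S e * star (S e)) * (S e * star (S e))
        = (S e * (star (S e) * S e)) * star (S e) := by noncomm_ring
    rw [hexp, mul_star_mul_self (S e) (hQid' e)]
  have main : ∀ n : ℕ, ∀ w, w ∈ (GVᶜ : Set VE) →
      {v | Relation.ReflTransGen (RelH r s GV) w v}.ncard = n →
      (ZPaths r s GE v₀ w).Finite ∧
      FiniteDimensional ℂ (LinearMap.range (P w).toLinearMap) ∧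
      Module.finrank ℂ (LinearMap.range (P w).toLinearMap)
        = (ZPaths r s GE v₀ w).ncard := by
    intro n
    induction n using Nat.strong_induction_on with
    | _ n ih =>
      intro w hw hn
      by_cases hwv : w = v₀
      · rw [hwv, zpaths_sink r s GE v₀ hext.sink_isSink]
        exact ⟨Set.finite_singleton _, FiniteDimensional.of_finrank_pos (by rw [hrank1]; norm_num),
          by rw [Set.ncard_singleton]; exact hrank1⟩
      · have hnotsink : ∃ e, s e = w := by
          by_contra hns
          exact hwv (hext.sink_unique w hw hns)
        set F := (hext.rowFinite w).toFinset with hF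
        have hmemF : ∀ e : EE, e ∈ F ↔ s e = w := fun e => by
          rw [hF, Set.Finite.mem_toFinset]; exact Iff.rfl
        have hGEw : ∀ e : EE, s e = w → e ∉ GE := fun e hse hGE =>
          hw (by rw [← hse]; exact (hext.subgraph e hGE).1)
        have hIH : ∀ e ∈ F, (ZPaths r s GE v₀ (r e)).Finite ∧
            FiniteDimensional ℂ (LinearMap.range (P (r e)).toLinearMap) ∧
            Module.finrank ℂ (LinearMap.range (P (r e)).toLinearMap)
              = (ZPaths r s GE v₀ (r e)).ncard := by
          intro e he
          have hse := (hmemF e).mp he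
          have hre : r e ∈ (GVᶜ : Set VE) := hext.new_range e (hGEw e hse)
          exact ih _ (hn ▸ measure_lt hext hw hse) (r e) hre rfl
        -- operator side
        have hsum : P w = ∑ e ∈ F, Q e := by
          rw [hCK2 w hnotsink, finsum_mem_eq_finite_toFinset_sum _ (hext.rowFinite w)]
        have horthQ := proj_sum_orth F Q (P w) (fun i _ => hQsa i) (fun i _ => hQid i)
          (hproj w).1.star_eq (hproj w).2 hsum
        have hrangeP : LinearMap.range (P w).toLinearMap
            = ⨆ e ∈ F, LinearMap.range (Q e).toLinearMap :=
          range_sum_eq_biSup F Q (P w) hsum horthQ (fun i _ => hQid i)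
        -- per-edge ranks
        have hrangeQ : ∀ e : EE, LinearMap.range (Q e).toLinearMap
            = LinearMap.range (S e).toLinearMap := fun e =>
          range_mul_star_self (S e) (hQid' e)
        have hrankS : ∀ e ∈ F, FiniteDimensional ℂ (LinearMap.range (S e).toLinearMap) ∧
            Module.finrank ℂ (LinearMap.range (S e).toLinearMap)
              = (ZPaths r s GE v₀ (r e)).ncard := by
          intro e he
          obtain ⟨-, hfd, hval⟩ := hIH e he
          have hfd' : FiniteDimensional ℂ (LinearMap.range (star (S e) * S e).toLinearMap) := by
            rw [hCK1 e]; exact hfd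
          obtain ⟨h1, h2⟩ := finrank_range_partial_isometry (S e) (hQid' e) hfd'
          refine ⟨h1, ?_⟩
          rw [h2]
          rw [show LinearMap.range (star (S e) * S e).toLinearMap
              = LinearMap.range (P (r e)).toLinearMap by rw [hCK1 e]]
          exact hval
        -- orthogonal ranges
        have hUorth : ∀ i ∈ F, ∀ j ∈ F, i ≠ j →
            LinearMap.range (Q i).toLinearMap ≤ (LinearMap.range (Q j).toLinearMap)ᗮ := by
          intro i hi j hj hij
          rintro x ⟨a, rfl⟩
          rw [Submodule.mem_orthogonal]
          rintro u ⟨b, rfl⟩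
          show (inner ℂ ((Q j) b) ((Q i) a) : ℂ) = 0
          rw [sa_inner (hQsa j) b ((Q i) a), ← ContinuousLinearMap.mul_apply,
            horthQ j hj i hi hij.symm]
          simp
        have hfdQ : ∀ e ∈ F, FiniteDimensional ℂ (LinearMap.range (Q e).toLinearMap) := by
          intro e he
          rw [hrangeQ e]
          exact (hrankS e he).1
        obtain ⟨hfdSup, hrankSup⟩ := finrank_biSup_orth F
          (fun e => LinearMap.range (Q e).toLinearMap) hfdQ hUorth
        -- combinatorial side
        have hdecomp : ZPaths r s GE v₀ w
            = ⋃ e ∈ F, List.cons e '' ZPaths r s GE v₀ (r e) := by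
          rw [zpaths_decomp r s GE v₀ w hwv hGEw]
          ext l
          simp only [Set.mem_iUnion, exists_prop, Set.mem_setOf_eq]
          constructor
          · rintro ⟨e, hse, hl⟩; exact ⟨e, (hmemF e).mpr hse, hl⟩
          · rintro ⟨e, he, hl⟩; exact ⟨e, (hmemF e).mp he, hl⟩
        have hconsinj : ∀ e : EE, Function.Injective (List.cons e) := fun e a b h => by
          injection h
        obtain ⟨hZwfin, hZwcard⟩ := ncard_disj_biUnion F
          (fun e => List.cons e '' ZPaths r s GE v₀ (r e))
          (fun e he => ((hIH e he).1).image _)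
          (by
            intro i hi j hj hij
            rw [Set.disjoint_left]
            rintro l ⟨t, -, rfl⟩ ⟨u, -, hlu⟩
            exact hij (by injection hlu.symm))
        refine ⟨hdecomp ▸ hZwfin, ?_, ?_⟩
        · rw [hrangeP]; exact hfdSup
        · rw [hrangeP, hrankSup, hdecomp, hZwcard]
          refine Finset.sum_congr rfl fun e he => ?_
          rw [hrangeQ e, (hrankS e he).2,
            Set.ncard_image_of_injective _ (hconsinj e)]
  intro e he
  have hre : r e ∈ (GVᶜ : Set VE) := hext.new_range e he
  obtain ⟨hZfin, hfd, hrank⟩ := main _ (r e) hre rfl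
  have hfd' : FiniteDimensional ℂ (LinearMap.range (star (S e) * S e).toLinearMap) := by
    rw [hCK1 e]; exact hfd
  obtain ⟨-, h2⟩ := finrank_range_partial_isometry (S e) (hQid' e) hfd'
  rw [h2, show LinearMap.range (star (S e) * S e).toLinearMap
      = LinearMap.range (P (r e)).toLinearMap by rw [hCK1 e]]
  exact hrank
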